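/- arXiv:0905.1763 — 4 statements merged into one kernel-verified Lean document; each statement's English description precedes it below -/
import Mathlib

section
/- Let G=(V,E) be a graph and 1 ≤ m ≤ |V|. Then k(G) ≥ min over m-subsets U of V of θ_E(E_G[U]; N_G[U]) − m + 1, where θ_E(E_G[U]; N_G[U]) is the minimum number of cliques of the induced subgraph N_G[U] needed to cover all edges in E_G[U]. -/
open SimpleGraph

/-- The competition graph of a digraph `D` (given as a relation): distinct vertices
`x`, `y` are adjacent iff they have a common out-neighbor in `D`. -/
def CompetitionGraph {V : Type*} (D : V → V → Prop) : SimpleGraph V where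
  Adj x y := x ≠ y ∧ ∃ v, D x v ∧ D y v
  symm := by constructor; rintro x y ⟨h, v, hx, hy⟩; exact ⟨h.symm, v, hy, hx⟩
  loopless := by constructor; rintro x ⟨h, -⟩; exact h rfl

/-- A digraph is acyclic iff it has no directed cycle, i.e. no vertex reaches itself
by a nonempty directed walk. -/
def DigraphAcyclic {V : Type*} (D : V → V → Prop) : Prop :=
  ∀ v, ¬ Relation.TransGen D v v

/-- The graph `G` together with `k` additional isolated vertices. -/
def addIsolated {V : Type*} (G : SimpleGraph V) (k : ℕ) : SimpleGraph (V ⊕ Fin k) where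
  Adj a b := ∃ x y, a = Sum.inl x ∧ b = Sum.inl y ∧ G.Adj x y
  symm := by constructor; rintro a b ⟨x, y, rfl, rfl, h⟩; exact ⟨y, x, rfl, rfl, h.symm⟩
  loopless := by
    constructor
    rintro a ⟨x, y, rfl, hy, h⟩
    obtain rfl := Sum.inl_injective hy
    exact G.irrefl h

/-- `G` plus `k` isolated vertices is the competition graph of some acyclic digraph. -/
def IsCompetitionWitness {V : Type*} (G : SimpleGraph V) (k : ℕ) : Prop :=
  ∃ D : (V ⊕ Fin k) → (V ⊕ Fin k) → Prop,
    DigraphAcyclic D ∧ CompetitionGraph D = addIsolated G k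

/-- The competition number of `G`: the least `k` such that `G` plus `k` isolated
vertices is the competition graph of an acyclic digraph. -/
noncomputable def compNum {V : Type*} (G : SimpleGraph V) : ℕ :=
  sInf {k | IsCompetitionWitness G k}

/-- The generalized edge clique cover number `θ_E(F; H)`: the minimum number of cliques
of `G` contained in the vertex set `H` (i.e. cliques of the induced subgraph on `H`)
needed so that every edge in `F` has both endpoints in some clique of the family. -/
noncomputable def thetaEOn {V : Type*} (G : SimpleGraph V) (F : Set (Sym2 V)) (H : Set V) : ℕ :=
  sInf {n | ∃ f : Fin n → Set V,
    (∀ i, f i ⊆ H ∧ G.IsClique (f i)) ∧ ∀ e ∈ F, ∃ i, ∀ x ∈ e, x ∈ f i}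

/-- The edge clique cover number `θ_E(G)`. -/
noncomputable def thetaE {V : Type*} (G : SimpleGraph V) : ℕ :=
  thetaEOn G G.edgeSet Set.univ

/-- The vertex clique cover number of the subgraph of `G` induced on `S`: the minimum
number of cliques of `G` contained in `S` whose union covers `S`. -/
noncomputable def thetaVOn {V : Type*} (G : SimpleGraph V) (S : Set V) : ℕ :=
  sInf {n | ∃ f : Fin n → Set V,
    (∀ i, f i ⊆ S ∧ G.IsClique (f i)) ∧ ∀ v ∈ S, ∃ i, v ∈ f i}

/-- The closed neighborhood `N_G[U]` of a vertex subset. -/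
def closedNbhd {V : Type*} (G : SimpleGraph V) (U : Set V) : Set V :=
  U ∪ {v | ∃ u ∈ U, G.Adj u v}

/-- The set `E_G[U]` of edges of `G` with at least one endpoint in `U`. -/
def incidentEdges {V : Type*} (G : SimpleGraph V) (U : Set V) : Set (Sym2 V) :=
  {e | e ∈ G.edgeSet ∧ ∃ x ∈ e, x ∈ U}

def finAbove (n c : ℕ) : {j : Fin n // c ≤ j.val} ≃ Fin (n - c) where
  toFun j := ⟨j.1.val - c, by have := j.1.isLt; have := j.2; omega⟩
  invFun i := ⟨⟨i.val + c, by have := i.isLt; omega⟩, Nat.le_add_left c i.val⟩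
  left_inv j := Subtype.ext (Fin.ext (Nat.sub_add_cancel j.2))
  right_inv i := Fin.ext (Nat.add_sub_cancel _ _)

lemma adj_of_mem_edge {V : Type*} (G : SimpleGraph V) {e : Sym2 V} (he : e ∈ G.edgeSet)
    {x y : V} (hx : x ∈ e) (hy : y ∈ e) (hxy : x ≠ y) : G.Adj x y := by
  induction e using Sym2.ind with
  | _ a b =>
    rw [Sym2.mem_iff] at hx hy
    rw [SimpleGraph.mem_edgeSet] at he
    rcases hx with rfl | rfl <;> rcases hy with rfl | rfl
    · exact absurd rfl hxy
    · exact he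
    · exact he.symm
    · exact absurd rfl hxy

lemma exists_witness {V : Type*} [Fintype V] (G : SimpleGraph V) :
    ∃ k, IsCompetitionWitness G k := by
  classical
  set q := Fintype.card G.edgeSet with hq
  let eq : G.edgeSet ≃ Fin q := Fintype.equivFin _
  refine ⟨q, fun a b => ∃ x i, a = Sum.inl x ∧ b = Sum.inr i ∧ x ∈ ((eq.symm i : G.edgeSet) : Sym2 V), ?_, ?_⟩
  · intro v hv
    rw [Relation.TransGen.head'_iff] at hv
    obtain ⟨b, ⟨x, i, rfl, rfl, -⟩, hb⟩ := hv
    rcases Relation.ReflTransGen.cases_head hb with h | ⟨c, ⟨x', i', h1, -⟩, -⟩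
    · cases h
    · cases h1
  · refine SimpleGraph.ext (funext fun a => funext fun b => propext ?_)
    constructor
    · rintro ⟨hne, w, ⟨x, i, rfl, rfl, hx⟩, ⟨y, i', rfl, hi, hy⟩⟩
      obtain rfl : i = i' := Sum.inr_injective hi
      refine ⟨x, y, rfl, rfl, ?_⟩
      exact adj_of_mem_edge G (eq.symm i).2 hx hy (fun h => hne (by rw [h]))
    · rintro ⟨x, y, rfl, rfl, hadj⟩
      refine ⟨fun h => hadj.ne (Sum.inl_injective h), Sum.inr (eq ⟨s(x,y), hadj⟩), ?_, ?_⟩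
      · exact ⟨x, _, rfl, rfl, by rw [Equiv.symm_apply_apply]; exact Sym2.mem_mk_left x y⟩
      · exact ⟨y, _, rfl, rfl, by rw [Equiv.symm_apply_apply]; exact Sym2.mem_mk_right x y⟩

theorem sano_lower_bound {V : Type*} [Fintype V] (G : SimpleGraph V)
    (m : ℕ) (hm1 : 1 ≤ m) (hm2 : m ≤ Fintype.card V) :
    (compNum G : ℤ) ≥
      (sInf ((fun U : Finset V =>
          thetaEOn G (incidentEdges G (↑U : Set V)) (closedNbhd G (↑U : Set V))) ''
        {U : Finset V | U.card = m}) : ℤ) - (m : ℤ) + 1 := by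
  classical
  set k := compNum G with hk
  have hwit : IsCompetitionWitness G k := Nat.sInf_mem (exists_witness G)
  obtain ⟨D, hacyc, hD⟩ := hwit
  -- extend the acyclicity order to a linear order on W := V ⊕ Fin k
  let r : (V ⊕ Fin k) → (V ⊕ Fin k) → Prop := fun a b => a = b ∨ Relation.TransGen D a b
  haveI hpo : IsPartialOrder (V ⊕ Fin k) r :=
    { refl := fun a => Or.inl rfl
      trans := by
        rintro a b c (rfl | hab) (rfl | hbc)
        · exact Or.inl rfl
        · exact Or.inr hbc
        · exact Or.inr hab
        · exact Or.inr (hab.trans hbc)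
      antisymm := by
        rintro a b (rfl | hab) (h | hba)
        · rfl
        · rfl
        · exact h.symm
        · exact absurd (hab.trans hba) (hacyc a) }
  obtain ⟨sle, hslin, hrs⟩ := extend_partialOrder r
  haveI := hslin
  have hDle : ∀ a b : V ⊕ Fin k, D a b → sle a b :=
    fun a b h => hrs a b (Or.inr (Relation.TransGen.single h))
  have hDne : ∀ a b : V ⊕ Fin k, D a b → a ≠ b := by
    intro a b h heq; subst heq; exact hacyc a (Relation.TransGen.single h)
  have hlt_of_le_of_lt : ∀ a b c : V ⊕ Fin k,
      sle a b → (sle b c ∧ b ≠ c) → (sle a c ∧ a ≠ c) := by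
    rintro a b c h1 ⟨h2, hne⟩
    exact ⟨trans_of sle h1 h2, fun heq => hne (antisymm_of sle h2 (heq ▸ h1))⟩
  letI : LinearOrder V :=
    { le := fun a b => sle (Sum.inl a) (Sum.inl b)
      le_refl := fun a => refl_of sle _
      le_trans := fun a b c h1 h2 => trans_of sle h1 h2
      le_antisymm := fun a b h1 h2 => Sum.inl_injective (antisymm_of sle h1 h2)
      le_total := fun a b => total_of sle _ _
      toDecidableLE := fun a b => Classical.dec _ }
  have hleV : ∀ a b : V, a ≤ b ↔ sle (Sum.inl a) (Sum.inl b) := fun a b => Iff.rfl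
  have hltV : ∀ a b : V, a < b ↔
      (sle (Sum.inl a) (Sum.inl b) ∧ (Sum.inl a : V ⊕ Fin k) ≠ Sum.inl b) := by
    intro a b
    rw [lt_iff_le_not_ge, hleV, hleV]
    constructor
    · rintro ⟨h1, h2⟩
      exact ⟨h1, fun heq => h2 (heq ▸ refl_of sle _)⟩
    · rintro ⟨h1, hne⟩
      exact ⟨h1, fun hba => hne (congrArg Sum.inl (Sum.inl_injective (antisymm_of sle h1 hba)))⟩
  set n := Fintype.card V with hn
  let e : Fin n ≃o V := monoEquivOfFin V rfl
  have hn0 : 0 < n := lt_of_lt_of_le hm1 hm2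
  let j₀ : Fin n := ⟨n - m, by omega⟩
  let u₀ : V := e j₀
  have hiff_le : ∀ x : V, u₀ ≤ x ↔ n - m ≤ (e.symm x).val := by
    intro x
    rw [show u₀ = e j₀ from rfl, ← OrderIso.le_iff_le e.symm, OrderIso.symm_apply_apply]
    exact Iff.rfl
  have hiff_lt : ∀ x : V, u₀ < x ↔ n - m + 1 ≤ (e.symm x).val := by
    intro x
    rw [show u₀ = e j₀ from rfl, ← OrderIso.lt_iff_lt e.symm, OrderIso.symm_apply_apply]
    exact Iff.rfl
  set U : Finset V := Finset.univ.filter (fun x => u₀ ≤ x) with hUdef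
  have hUcard : U.card = m := by
    rw [hUdef, ← Fintype.card_subtype]
    have e1 : {x : V // u₀ ≤ x} ≃ {j : Fin n // n - m ≤ j.val} :=
      (Equiv.subtypeEquiv e.symm.toEquiv (fun x => hiff_le x)).trans
        (Equiv.subtypeEquivRight (fun j => Iff.rfl))
    rw [Fintype.card_congr (e1.trans (finAbove n (n - m))), Fintype.card_fin]
    omega
  have hVltcard : Fintype.card {x : V // u₀ < x} = m - 1 := by
    have e1 : {x : V // u₀ < x} ≃ {j : Fin n // n - m + 1 ≤ j.val} :=
      (Equiv.subtypeEquiv e.symm.toEquiv (fun x => hiff_lt x)).trans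
        (Equiv.subtypeEquivRight (fun j => Iff.rfl))
    rw [Fintype.card_congr (e1.trans (finAbove n (n - m + 1))), Fintype.card_fin]
    omega
  let e2 : {x : V // u₀ < x} ≃ Fin (m - 1) := Fintype.equivFinOfCardEq hVltcard
  -- predicate on W : strictly above inl u₀
  let P : (V ⊕ Fin k) → Prop := fun w => sle (Sum.inl u₀) w ∧ (Sum.inl u₀ : V ⊕ Fin k) ≠ w
  let split : {w : V ⊕ Fin k // P w} → ({x : V // u₀ < x} ⊕ Fin k) := fun w =>
    match w with
    | ⟨Sum.inl x, hx⟩ => Sum.inl ⟨x, (hltV u₀ x).mpr ⟨hx.1, hx.2⟩⟩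
    | ⟨Sum.inr i, _⟩ => Sum.inr i
  have hsplit : Function.Injective split := by
    have hg : ∀ w : {w : V ⊕ Fin k // P w},
        Sum.elim (fun x : {x : V // u₀ < x} => (Sum.inl x.1 : V ⊕ Fin k)) Sum.inr (split w)
          = w.1 := by
      rintro ⟨w, hw⟩
      cases w <;> rfl
    intro a b hab
    apply Subtype.ext
    rw [← hg a, ← hg b, hab]
  let ι : {w : V ⊕ Fin k // P w} → Fin (m - 1 + k) :=
    fun w => finSumFinEquiv (Sum.map e2 id (split w))
  have hι : Function.Injective ι :=
    finSumFinEquiv.injective.comp ((e2.injective.sumMap (fun a b h => h)).comp hsplit)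
  let f : Fin (m - 1 + k) → Set V := fun j =>
    if h : ∃ w : {w : V ⊕ Fin k // P w}, ι w = j then
      {x : V | D (Sum.inl x) h.choose.1} ∩ closedNbhd G (↑U : Set V)
    else ∅
  -- every in-neighborhood is a clique of G
  have hclique : ∀ w : V ⊕ Fin k, G.IsClique {x : V | D (Sum.inl x) w} := by
    intro w x hx y hy hne
    have hadj : (CompetitionGraph D).Adj (Sum.inl x) (Sum.inl y) :=
      ⟨fun h => hne (Sum.inl_injective h), w, hx, hy⟩
    rw [hD] at hadj
    obtain ⟨x', y', hx', hy', hadj⟩ := hadj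
    cases Sum.inl_injective hx'
    cases Sum.inl_injective hy'
    exact hadj
  have hcond : ∀ j, f j ⊆ closedNbhd G (↑U : Set V) ∧ G.IsClique (f j) := by
    intro j
    by_cases h : ∃ w : {w : V ⊕ Fin k // P w}, ι w = j
    · constructor
      · simp only [f]
        rw [dif_pos h]
        exact Set.inter_subset_right
      · show G.IsClique (if h' : _ then _ else _)
        rw [dif_pos h]
        exact (hclique _).subset Set.inter_subset_left
    · constructor
      · simp only [f]
        rw [dif_neg h]
        exact Set.empty_subset _
      · show G.IsClique (if h' : _ then _ else _)
        rw [dif_neg h]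
        exact Set.pairwise_empty _
  have key : ∀ a b : V, G.Adj a b → a ∈ U → ∃ i, ∀ z ∈ s(a, b), z ∈ f i := by
    intro a b hab haU
    have hadj : (CompetitionGraph D).Adj (Sum.inl a) (Sum.inl b) := by
      rw [hD]; exact ⟨a, b, rfl, rfl, hab⟩
    obtain ⟨-, w, hwa, hwb⟩ := hadj
    have hu₀a : sle (Sum.inl u₀) (Sum.inl a) := by
      rw [← hleV]
      exact (Finset.mem_filter.mp (hUdef ▸ haU)).2
    have hPw : P w := hlt_of_le_of_lt _ _ _ hu₀a ⟨hDle _ _ hwa, hDne _ _ hwa⟩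
    refine ⟨ι ⟨w, hPw⟩, ?_⟩
    intro z hz
    show z ∈ (if h' : ∃ w' : {w : V ⊕ Fin k // P w}, ι w' = ι ⟨w, hPw⟩ then _ else _)
    have hex : ∃ w' : {w : V ⊕ Fin k // P w}, ι w' = ι ⟨w, hPw⟩ := ⟨⟨w, hPw⟩, rfl⟩
    rw [dif_pos hex]
    have hch : hex.choose.1 = w := congrArg Subtype.val (hι hex.choose_spec)
    rw [hch]
    rw [Sym2.mem_iff] at hz
    rcases hz with rfl | rfl
    · exact ⟨hwa, Or.inl haU⟩
    · exact ⟨hwb, Or.inr ⟨a, haU, hab⟩⟩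
  have htheta : thetaEOn G (incidentEdges G (↑U : Set V)) (closedNbhd G (↑U : Set V))
      ≤ m - 1 + k := by
    apply Nat.sInf_le
    refine ⟨f, hcond, ?_⟩
    rintro e ⟨hee, x, hxe, hxU⟩
    induction e using Sym2.ind with
    | _ a b =>
      rw [SimpleGraph.mem_edgeSet] at hee
      rw [Sym2.mem_iff] at hxe
      rcases hxe with rfl | rfl
      · exact key x b hee hxU
      · obtain ⟨i, hi⟩ := key x a hee.symm hxU
        exact ⟨i, fun z hz => hi z (Sym2.eq_swap ▸ hz)⟩
  have hbdd : BddBelow ((fun U : Finset V =>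
      (thetaEOn G (incidentEdges G (↑U : Set V)) (closedNbhd G (↑U : Set V)) : ℤ)) ''
      {U : Finset V | U.card = m}) := by
    refine ⟨0, ?_⟩
    rintro z ⟨U', -, rfl⟩
    exact Int.natCast_nonneg _
  have hA : sInf ((fun U : Finset V =>
        (thetaEOn G (incidentEdges G (↑U : Set V)) (closedNbhd G (↑U : Set V)) : ℤ)) ''
      {U : Finset V | U.card = m})
      ≤ (thetaEOn G (incidentEdges G (↑U : Set V)) (closedNbhd G (↑U : Set V)) : ℤ) :=
    csInf_le hbdd ⟨U, hUcard, rfl⟩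
  omega
end

section
/- The competition number of the dodecahedron graph equals 12. -/
open SimpleGraph

/-- The edge list of the dodecahedron graph (LCF notation `[10,7,4,-4,-7,10,-4,7,-7,4]^2`):
a 20-cycle together with ten chords. -/
def dodecaEdges : List (ℕ × ℕ) :=
  [(0,1),(1,2),(2,3),(3,4),(4,5),(5,6),(6,7),(7,8),(8,9),(9,10),
   (10,11),(11,12),(12,13),(13,14),(14,15),(15,16),(16,17),(17,18),(18,19),(19,0),
   (0,10),(1,8),(2,6),(3,19),(4,17),(5,15),(7,14),(9,13),(11,18),(12,16)]

/-- The dodecahedron graph: the 3-regular planar graph on 20 vertices with 30 edges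
whose faces are pentagons. -/
def Dodecahedron : SimpleGraph (Fin 20) :=
  SimpleGraph.fromRel (fun i j => ((i : ℕ), (j : ℕ)) ∈ dodecaEdges)


/-! ### Auxiliary material for the proof -/

section Aux

instance dodecaAdjDec : DecidableRel Dodecahedron.Adj := fun a b =>
  decidable_of_iff
    (a ≠ b ∧ ((((a : ℕ), (b : ℕ)) ∈ dodecaEdges) ∨ (((b : ℕ), (a : ℕ)) ∈ dodecaEdges)))
    Iff.rfl

lemma acyclic_of_rank {V : Type*} (D : V → V → Prop) (r : V → ℕ)
    (h : ∀ x y, D x y → r x < r y) : DigraphAcyclic D := by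
  intro v hv
  have h2 : ∀ a b, Relation.TransGen D a b → r a < r b := by
    intro a b hab
    induction hab with
    | single h' => exact h _ _ h'
    | tail _ h' ih => exact ih.trans (h _ _ h')
  exact lt_irrefl _ (h2 v v hv)

/-- The 32 vertices for the upper-bound construction. -/
abbrev W12 := Fin 20 ⊕ Fin 12

open Sum in
/-- The in-neighbours of each vertex in the witness digraph. -/
def inNbrs : W12 → List W12
  | Sum.inl i =>
    match (i : ℕ) with
    | 2 => [inl 0, inl 1]
    | 3 => [inl 1, inl 2]
    | 4 => [inl 2, inl 3]
    | 5 => [inl 3, inl 4]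
    | 6 => [inl 4, inl 5]
    | 7 => [inl 5, inl 6]
    | 8 => [inl 2, inl 6]
    | 9 => [inl 6, inl 7]
    | 10 => [inl 7, inl 8]
    | 11 => [inl 1, inl 8]
    | 12 => [inl 8, inl 9]
    | 13 => [inl 9, inl 10]
    | 14 => [inl 0, inl 10]
    | 15 => [inl 10, inl 11]
    | 16 => [inl 11, inl 12]
    | 17 => [inl 12, inl 13]
    | 18 => [inl 9, inl 13]
    | 19 => [inl 13, inl 14]
    | _ => []
  | Sum.inr j =>
    match (j : ℕ) with
    | 0 => [inl 7, inl 14]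
    | 1 => [inl 14, inl 15]
    | 2 => [inl 5, inl 15]
    | 3 => [inl 15, inl 16]
    | 4 => [inl 12, inl 16]
    | 5 => [inl 16, inl 17]
    | 6 => [inl 4, inl 17]
    | 7 => [inl 17, inl 18]
    | 8 => [inl 11, inl 18]
    | 9 => [inl 18, inl 19]
    | 10 => [inl 3, inl 19]
    | 11 => [inl 0, inl 19]
    | _ => []

/-- The witness digraph. -/
def myD (x y : W12) : Prop := ∃ z ∈ inNbrs y, z = x

instance (x y : W12) : Decidable (myD x y) :=
  inferInstanceAs (Decidable (∃ z ∈ inNbrs y, z = x))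

/-- Rank function certifying acyclicity. -/
def myRank : W12 → ℕ
  | Sum.inl i => (i : ℕ)
  | Sum.inr j => 20 + (j : ℕ)

lemma myD_rank : ∀ x y : W12, myD x y → myRank x < myRank y := by decide

lemma myD_acyclic : DigraphAcyclic myD := acyclic_of_rank myD myRank myD_rank

def adjF : W12 → W12 → Prop
  | Sum.inl a, Sum.inl b => Dodecahedron.Adj a b
  | Sum.inl _, Sum.inr _ => False
  | Sum.inr _, Sum.inl _ => False
  | Sum.inr _, Sum.inr _ => False

instance : ∀ x y : W12, Decidable (adjF x y)
  | Sum.inl a, Sum.inl b => inferInstanceAs (Decidable (Dodecahedron.Adj a b))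
  | Sum.inl _, Sum.inr _ => inferInstanceAs (Decidable False)
  | Sum.inr _, Sum.inl _ => inferInstanceAs (Decidable False)
  | Sum.inr _, Sum.inr _ => inferInstanceAs (Decidable False)

set_option maxHeartbeats 4000000 in
lemma comp_eq_adjF : ∀ x y : W12, (x ≠ y ∧ ∃ v, myD x v ∧ myD y v) ↔ adjF x y := by decide

lemma adjF_iff : ∀ x y : W12, adjF x y ↔
    (∃ a b, x = Sum.inl a ∧ y = Sum.inl b ∧ Dodecahedron.Adj a b) := by
  rintro (a | a) (b | b) <;> simp [adjF]

lemma myD_comp : ∀ x y : W12,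
    (x ≠ y ∧ ∃ v, myD x v ∧ myD y v) ↔
      (∃ a b, x = Sum.inl a ∧ y = Sum.inl b ∧ Dodecahedron.Adj a b) :=
  fun x y => (comp_eq_adjF x y).trans (adjF_iff x y)

lemma upper_witness : IsCompetitionWitness Dodecahedron 12 := by
  refine ⟨myD, myD_acyclic, ?_⟩
  apply SimpleGraph.ext
  funext x y
  exact propext (myD_comp x y)

/-- The edges as pairs of `Fin 20`. -/
def dlist : List (Fin 20 × Fin 20) :=
  [(0,1),(1,2),(2,3),(3,4),(4,5),(5,6),(6,7),(7,8),(8,9),(9,10),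
   (10,11),(11,12),(12,13),(13,14),(14,15),(15,16),(16,17),(17,18),(18,19),(19,0),
   (0,10),(1,8),(2,6),(3,19),(4,17),(5,15),(7,14),(9,13),(11,18),(12,16)]

def dE (i : Fin 30) : Fin 20 × Fin 20 := dlist.getD i.val (0, 0)

lemma dE_adj : ∀ i : Fin 30, Dodecahedron.Adj (dE i).1 (dE i).2 := by decide

lemma dE_distinct : ∀ i j : Fin 30, i ≠ j →
    ¬ (((dE i).1 = (dE j).1 ∧ (dE i).2 = (dE j).2) ∨
       ((dE i).1 = (dE j).2 ∧ (dE i).2 = (dE j).1)) := by decide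

lemma dodeca_triangle_free : ∀ a b c : Fin 20,
    Dodecahedron.Adj a b → Dodecahedron.Adj a c → Dodecahedron.Adj b c → False := by decide


lemma lower_bound : ∀ k : ℕ, IsCompetitionWitness Dodecahedron k → 12 ≤ k := by
  intro k ⟨D, hac, hcg⟩
  have hA : ∀ x y, (CompetitionGraph D).Adj x y ↔ (addIsolated Dodecahedron k).Adj x y :=
    fun x y => by rw [hcg]
  -- choose a prey for each edge
  have hex : ∀ i : Fin 30, ∃ v, D (Sum.inl (dE i).1) v ∧ D (Sum.inl (dE i).2) v := by
    intro i
    have h : (addIsolated Dodecahedron k).Adj (Sum.inl (dE i).1) (Sum.inl (dE i).2) :=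
      ⟨(dE i).1, (dE i).2, rfl, rfl, dE_adj i⟩
    exact ((hA _ _).mpr h).2
  choose p hp1 hp2 using hex
  -- sharing a prey forces adjacency
  have hadj : ∀ u w : Fin 20, u ≠ w → ∀ v, D (Sum.inl u) v → D (Sum.inl w) v →
      Dodecahedron.Adj u w := by
    intro u w hne v h1 h2
    have h : (CompetitionGraph D).Adj (Sum.inl u) (Sum.inl w) :=
      ⟨fun hc => hne (Sum.inl_injective hc), v, h1, h2⟩
    obtain ⟨a, b, ha, hb, hG⟩ := (hA _ _).mp h
    obtain rfl := Sum.inl_injective ha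
    obtain rfl := Sum.inl_injective hb
    exact hG
  -- the prey map is injective
  have hinj : Function.Injective p := by
    intro i j hij
    by_contra hne
    have hab : Dodecahedron.Adj (dE i).1 (dE i).2 := dE_adj i
    have hcd : Dodecahedron.Adj (dE j).1 (dE j).2 := dE_adj j
    have hDa : D (Sum.inl (dE i).1) (p i) := hp1 i
    have hDb : D (Sum.inl (dE i).2) (p i) := hp2 i
    have hDc : D (Sum.inl (dE j).1) (p i) := hij ▸ hp1 j
    have hDd : D (Sum.inl (dE j).2) (p i) := hij ▸ hp2 j
    have hdist := dE_distinct i j hne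
    by_cases hca : (dE j).1 = (dE i).1
    · have hdb : (dE j).2 ≠ (dE i).2 := fun h => hdist (Or.inl ⟨hca.symm, h.symm⟩)
      exact dodeca_triangle_free (dE i).1 (dE i).2 (dE j).2 hab (hca ▸ hcd)
        (hadj _ _ (Ne.symm hdb) _ hDb hDd)
    · by_cases hcb : (dE j).1 = (dE i).2
      · have hda : (dE j).2 ≠ (dE i).1 := fun h => hdist (Or.inr ⟨h.symm, hcb.symm⟩)
        exact dodeca_triangle_free (dE i).1 (dE i).2 (dE j).2 hab
          (hadj _ _ (Ne.symm hda) _ hDa hDd) (hcb ▸ hcd)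
      · exact dodeca_triangle_free (dE i).1 (dE i).2 (dE j).1 hab
          (hadj _ _ (Ne.symm hca) _ hDa hDc) (hadj _ _ (Ne.symm hcb) _ hDb hDc)
  -- two minimal vertices of the acyclic digraph
  haveI : IsTrans (Fin 20 ⊕ Fin k) (Relation.TransGen D) :=
    ⟨fun _ _ _ => Relation.TransGen.trans⟩
  haveI : IsIrrefl (Fin 20 ⊕ Fin k) (Relation.TransGen D) := ⟨hac⟩
  have hwf : WellFounded (Relation.TransGen D) := Finite.wellFounded_of_trans_of_irrefl _
  obtain ⟨m1, -, hm1⟩ := hwf.has_min Set.univ ⟨Sum.inl 0, trivial⟩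
  have hne01 : (Sum.inl 1 : Fin 20 ⊕ Fin k) ≠ Sum.inl 0 :=
    fun h => absurd (Sum.inl_injective h) (by decide)
  have hnonempty : ({x | x ≠ m1} : Set (Fin 20 ⊕ Fin k)).Nonempty := by
    by_cases h : m1 = Sum.inl 0
    · exact ⟨Sum.inl 1, by rw [Set.mem_setOf_eq, h]; exact hne01⟩
    · exact ⟨Sum.inl 0, fun hc => h hc.symm⟩
  obtain ⟨m2, hm2mem, hm2⟩ := hwf.has_min {x | x ≠ m1} hnonempty
  have hm1' : ∀ x, ¬ D x m1 := fun x hx => hm1 x trivial (Relation.TransGen.single hx)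
  have hm2' : ∀ x, D x m2 → x = m1 := by
    intro x hx
    by_contra h
    exact hm2 x h (Relation.TransGen.single hx)
  have hm12 : m1 ≠ m2 := fun h => hm2mem h.symm
  -- the prey avoids the two minimal vertices
  have hpm1 : ∀ i, p i ≠ m1 := fun i h => hm1' _ (h ▸ hp1 i)
  have hpm2 : ∀ i, p i ≠ m2 := by
    intro i h
    have h1 := hm2' _ (h ▸ hp1 i)
    have h2 := hm2' _ (h ▸ hp2 i)
    have h3 : Sum.inl (dE i).1 = (Sum.inl (dE i).2 : Fin 20 ⊕ Fin k) := by rw [h1, h2]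
    exact (dE_adj i).ne (Sum.inl_injective h3)
  -- counting
  have hcard : (Finset.univ.image p).card = 30 := by
    rw [Finset.card_image_of_injective _ hinj, Finset.card_univ, Fintype.card_fin]
  have hsub : Finset.univ.image p ⊆ Finset.univ \ ({m1, m2} : Finset (Fin 20 ⊕ Fin k)) := by
    intro x hx
    simp only [Finset.mem_image] at hx
    obtain ⟨i, -, rfl⟩ := hx
    simp only [Finset.mem_sdiff, Finset.mem_univ, true_and, Finset.mem_insert,
      Finset.mem_singleton]
    push_neg
    exact ⟨hpm1 i, hpm2 i⟩
  have h1 := Finset.card_le_card hsub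
  have h2 : (Finset.univ \ ({m1, m2} : Finset (Fin 20 ⊕ Fin k))).card = (20 + k) - 2 := by
    rw [Finset.card_sdiff_of_subset (Finset.subset_univ _), Finset.card_univ, Fintype.card_sum,
      Fintype.card_fin, Fintype.card_fin, Finset.card_pair hm12]
  rw [hcard, h2] at h1
  omega

end Aux

theorem competition_number_dodecahedron :
    compNum Dodecahedron = 12 := by
  refine Nat.le_antisymm (Nat.sInf_le upper_witness) ?_
  exact le_csInf ⟨12, upper_witness⟩ lower_bound
end

section
/- The edge clique cover number of the icosahedron graph equals 12. -/
open SimpleGraph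

/-- The edge list of the icosahedron graph (pentagonal antiprism on `1..10` together
with apexes `0` and `11`). -/
def icosaEdges : List (ℕ × ℕ) :=
  [(0,1),(0,2),(0,3),(0,4),(0,5),(1,2),(2,3),(3,4),(4,5),(5,1),
   (11,6),(11,7),(11,8),(11,9),(11,10),(6,7),(7,8),(8,9),(9,10),(10,6),
   (1,6),(1,7),(2,7),(2,8),(3,8),(3,9),(4,9),(4,10),(5,10),(5,6)]

/-- The icosahedron graph: the 5-regular graph on 12 vertices with 30 edges
arising as the 1-skeleton of the icosahedron. -/
def Icosahedron : SimpleGraph (Fin 12) :=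
  SimpleGraph.fromRel (fun i j => ((i : ℕ), (j : ℕ)) ∈ icosaEdges)

set_option maxRecDepth 100000

instance : DecidableRel Icosahedron.Adj := fun a b =>
  inferInstanceAs (Decidable (a ≠ b ∧
    (((a:ℕ),(b:ℕ)) ∈ icosaEdges ∨ ((b:ℕ),(a:ℕ)) ∈ icosaEdges)))

lemma icosa_noK4 : ∀ a b c d : Fin 12,
    ¬(Icosahedron.Adj a b ∧ Icosahedron.Adj a c ∧ Icosahedron.Adj a d ∧
      Icosahedron.Adj b c ∧ Icosahedron.Adj b d ∧ Icosahedron.Adj c d) := by decide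

lemma icosa_clique_card_le3 (s : Finset (Fin 12))
    (h : Icosahedron.IsClique (s : Set (Fin 12))) : s.card ≤ 3 := by
  by_contra hlt
  push_neg at hlt
  obtain ⟨t, hts, ht4⟩ := Finset.exists_subset_card_eq (show 4 ≤ s.card by omega)
  obtain ⟨a, ha⟩ := Finset.card_pos.mp (by omega : 0 < t.card)
  have h3 : (t.erase a).card = 3 := by rw [Finset.card_erase_of_mem ha, ht4]
  obtain ⟨x, y, z, hxy, hxz, hyz, he⟩ := Finset.card_eq_three.mp h3
  have hx : x ∈ t.erase a := he ▸ by simp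
  have hy : y ∈ t.erase a := he ▸ by simp
  have hz : z ∈ t.erase a := he ▸ by simp
  have hma : a ∈ (s : Set (Fin 12)) := hts ha
  have hmx : x ∈ (s : Set (Fin 12)) := hts (Finset.mem_of_mem_erase hx)
  have hmy : y ∈ (s : Set (Fin 12)) := hts (Finset.mem_of_mem_erase hy)
  have hmz : z ∈ (s : Set (Fin 12)) := hts (Finset.mem_of_mem_erase hz)
  exact icosa_noK4 a x y z
    ⟨h hma hmx (Finset.ne_of_mem_erase hx).symm,
     h hma hmy (Finset.ne_of_mem_erase hy).symm,
     h hma hmz (Finset.ne_of_mem_erase hz).symm,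
     h hmx hmy hxy, h hmx hmz hxz, h hmy hmz hyz⟩

lemma icosa_deg5 : ∀ v : Fin 12,
    (Finset.univ.filter (Icosahedron.Adj v)).card = 5 := by decide

/-- The explicit 12 triangles of a minimum edge clique cover. -/
def icosaTris : Fin 12 → Finset (Fin 12) :=
  ![{0,1,2},{0,1,5},{0,3,4},{1,6,7},{2,3,8},{2,7,8},
    {3,4,9},{4,5,10},{5,6,10},{6,7,11},{8,9,11},{9,10,11}]

lemma icosaTris_clique : ∀ i, Icosahedron.IsClique ((icosaTris i : Finset (Fin 12)) : Set (Fin 12)) := by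
  decide

lemma icosaTris_cover : ∀ a b : Fin 12, Icosahedron.Adj a b →
    ∃ i : Fin 12, a ∈ icosaTris i ∧ b ∈ icosaTris i := by decide

theorem edge_clique_cover_number_icosahedron :
    thetaE Icosahedron = 12 := by
  classical
  unfold thetaE thetaEOn
  have h12 : (12 : ℕ) ∈ {n | ∃ f : Fin n → Set (Fin 12),
      (∀ i, f i ⊆ Set.univ ∧ Icosahedron.IsClique (f i)) ∧
      ∀ e ∈ Icosahedron.edgeSet, ∃ i, ∀ x ∈ e, x ∈ f i} := by
    refine ⟨fun i => (icosaTris i : Set (Fin 12)), fun i => ⟨Set.subset_univ _, icosaTris_clique i⟩, ?_⟩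
    intro e
    induction e using Sym2.ind with
    | _ a b =>
      intro he
      rw [SimpleGraph.mem_edgeSet] at he
      obtain ⟨i, hai, hbi⟩ := icosaTris_cover a b he
      refine ⟨i, fun x hx => ?_⟩
      rcases Sym2.mem_iff.mp hx with rfl | rfl <;> simpa
  refine le_antisymm (Nat.sInf_le h12) (le_csInf ⟨12, h12⟩ ?_)
  rintro n ⟨f, hf, hcov⟩
  -- `Fin n` is nonempty since at least one edge must be covered
  have hne : Nonempty (Fin n) := by
    obtain ⟨i, -⟩ := hcov s(0, 1) (Icosahedron.mem_edgeSet.mpr (by decide))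
    exact ⟨i⟩
  -- each clique of the family has at most 3 vertices
  have col : ∀ i : Fin n, (Finset.univ.filter (fun v => v ∈ f i)).card ≤ 3 := by
    intro i
    apply icosa_clique_card_le3
    have : ((Finset.univ.filter (fun v => v ∈ f i) : Finset (Fin 12)) : Set (Fin 12)) = f i := by
      ext x; simp
    rw [this]; exact (hf i).2
  -- each vertex lies in at least 3 cliques of the family
  have key : ∀ v : Fin 12, 3 ≤ (Finset.univ.filter (fun i => v ∈ f i)).card := by
    intro v
    set N : Finset (Fin 12) := Finset.univ.filter (Icosahedron.Adj v) with hNdef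
    have hchoice : ∀ u ∈ N, ∃ i, v ∈ f i ∧ u ∈ f i := by
      intro u hu
      have hadj : Icosahedron.Adj v u := (Finset.mem_filter.mp hu).2
      obtain ⟨i, hi⟩ := hcov s(v, u) (Icosahedron.mem_edgeSet.mpr hadj)
      exact ⟨i, hi v (by simp), hi u (by simp)⟩
    let g : Fin 12 → Fin n := fun u =>
      if h : u ∈ N then (hchoice u h).choose else hne.some
    have hgmem : ∀ u ∈ N, v ∈ f (g u) ∧ u ∈ f (g u) := by
      intro u hu
      simp only [g, dif_pos hu]
      exact (hchoice u hu).choose_spec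
    have fiber : ∀ j ∈ N.image g, (N.filter (fun u => g u = j)).card ≤ 2 := by
      intro j hj
      obtain ⟨u0, hu0, rfl⟩ := Finset.mem_image.mp hj
      have hvj : v ∈ f (g u0) := (hgmem u0 hu0).1
      have hsub : insert v (N.filter (fun u => g u = g u0)) ⊆
          (Set.toFinite (f (g u0))).toFinset := by
        intro x hx
        rw [Set.Finite.mem_toFinset]
        rcases Finset.mem_insert.mp hx with rfl | hx
        · exact hvj
        · obtain ⟨hxN, hxg⟩ := Finset.mem_filter.mp hx
          exact hxg ▸ (hgmem x hxN).2
      have hvnot : v ∉ N.filter (fun u => g u = g u0) := by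
        intro h
        exact Icosahedron.irrefl (Finset.mem_filter.mp (Finset.mem_filter.mp h).1).2
      have hcard3 : ((Set.toFinite (f (g u0))).toFinset).card ≤ 3 := by
        apply icosa_clique_card_le3
        rw [Set.Finite.coe_toFinset]
        exact (hf (g u0)).2
      have := Finset.card_le_card hsub
      rw [Finset.card_insert_of_notMem hvnot] at this
      omega
    have hNle : N.card ≤ 2 * (N.image g).card :=
      Finset.card_le_mul_card_image N 2 fiber
    have himg : N.image g ⊆ Finset.univ.filter (fun i => v ∈ f i) := by
      intro j hj
      obtain ⟨u, hu, rfl⟩ := Finset.mem_image.mp hj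
      exact Finset.mem_filter.mpr ⟨Finset.mem_univ _, (hgmem u hu).1⟩
    have h5 : N.card = 5 := icosa_deg5 v
    have := Finset.card_le_card himg
    omega
  -- double counting
  have hsum : (36 : ℕ) ≤ 3 * n := by
    calc (36 : ℕ) = ∑ _v : Fin 12, 3 := by simp
    _ ≤ ∑ v : Fin 12, (Finset.univ.filter (fun i => v ∈ f i)).card :=
        Finset.sum_le_sum (fun v _ => key v)
    _ = ∑ v : Fin 12, ∑ i : Fin n, (if v ∈ f i then 1 else 0) :=
        Finset.sum_congr rfl (fun v _ => Finset.card_filter _ _)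
    _ = ∑ i : Fin n, ∑ v : Fin 12, (if v ∈ f i then 1 else 0) := Finset.sum_comm
    _ = ∑ i : Fin n, (Finset.univ.filter (fun v => v ∈ f i)).card :=
        Finset.sum_congr rfl (fun i _ => (Finset.card_filter _ _).symm)
    _ ≤ ∑ _i : Fin n, 3 := Finset.sum_le_sum (fun i _ => col i)
    _ = 3 * n := by simp [mul_comm]
  omega
end

section
/- In any edge clique cover F of the icosahedron graph, every vertex v belongs to at least 3 cliques of F. -/
open SimpleGraph

/-- The conjunction of adjacency/nonadjacency facts needed around a vertex `v`
whose neighborhood is the 5-cycle `a-b-c-d-e-a`. -/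
def NbhdC5 (v a b c d e : Fin 12) : Prop :=
  Icosahedron.Adj v a ∧ Icosahedron.Adj v b ∧ Icosahedron.Adj v c ∧
  Icosahedron.Adj v d ∧ Icosahedron.Adj v e ∧
  a ≠ c ∧ a ≠ d ∧ b ≠ d ∧ b ≠ e ∧ c ≠ e ∧
  ¬ Icosahedron.Adj a c ∧ ¬ Icosahedron.Adj a d ∧ ¬ Icosahedron.Adj b d ∧
  ¬ Icosahedron.Adj b e ∧ ¬ Icosahedron.Adj c e

set_option synthInstance.maxSize 2000 in
set_option synthInstance.maxHeartbeats 1000000 in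
instance (v a b c d e : Fin 12) : Decidable (NbhdC5 v a b c d e) := by
  unfold NbhdC5 Icosahedron
  simp only [SimpleGraph.fromRel_adj]
  infer_instance

lemma card_ge_three {n : ℕ} (ia ib ic id ie : Fin n)
    (h1 : ia ≠ ic) (h2 : ia ≠ id) (h3 : ib ≠ id) (h4 : ib ≠ ie) (h5 : ic ≠ ie) :
    3 ≤ ({ia, ib, ic, id, ie} : Finset (Fin n)).card := by
  by_cases h : ia = ie
  · subst h
    have hsub : ({ia, ib, id} : Finset (Fin n)) ⊆ {ia, ib, ic, id, ia} := by
      intro x hx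
      simp only [Finset.mem_insert, Finset.mem_singleton] at hx ⊢
      tauto
    have h3' : ({ia, ib, id} : Finset (Fin n)).card = 3 :=
      Finset.card_eq_three.mpr ⟨ia, ib, id, (Ne.symm h4), h2, h3, rfl⟩
    calc 3 = ({ia, ib, id} : Finset (Fin n)).card := h3'.symm
      _ ≤ _ := Finset.card_le_card hsub
  · have hsub : ({ia, ic, ie} : Finset (Fin n)) ⊆ {ia, ib, ic, id, ie} := by
      intro x hx
      simp only [Finset.mem_insert, Finset.mem_singleton] at hx ⊢
      tauto
    have h3' : ({ia, ic, ie} : Finset (Fin n)).card = 3 :=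
      Finset.card_eq_three.mpr ⟨ia, ic, ie, h1, h, h5, rfl⟩
    calc 3 = ({ia, ic, ie} : Finset (Fin n)).card := h3'.symm
      _ ≤ _ := Finset.card_le_card hsub

lemma key (n : ℕ) (f : Fin n → Set (Fin 12))
    (hclique : ∀ i, Icosahedron.IsClique (f i))
    (hcover : ∀ e ∈ Icosahedron.edgeSet, ∃ i, ∀ x ∈ e, x ∈ f i)
    (v a b c d e : Fin 12) (h : NbhdC5 v a b c d e) :
    3 ≤ {i : Fin n | v ∈ f i}.ncard := by
  obtain ⟨hva, hvb, hvc, hvd, hve, hac, had, hbd, hbe, hce,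
    nac, nad, nbd, nbe, nce⟩ := h
  obtain ⟨ia, hia⟩ := hcover s(v, a) (Icosahedron.mem_edgeSet.mpr hva)
  obtain ⟨ib, hib⟩ := hcover s(v, b) (Icosahedron.mem_edgeSet.mpr hvb)
  obtain ⟨ic, hic⟩ := hcover s(v, c) (Icosahedron.mem_edgeSet.mpr hvc)
  obtain ⟨id, hid⟩ := hcover s(v, d) (Icosahedron.mem_edgeSet.mpr hvd)
  obtain ⟨ie, hie⟩ := hcover s(v, e) (Icosahedron.mem_edgeSet.mpr hve)
  have hva' : v ∈ f ia := hia v (Sym2.mem_mk_left v a)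
  have hvb' : v ∈ f ib := hib v (Sym2.mem_mk_left v b)
  have hvc' : v ∈ f ic := hic v (Sym2.mem_mk_left v c)
  have hvd' : v ∈ f id := hid v (Sym2.mem_mk_left v d)
  have hve' : v ∈ f ie := hie v (Sym2.mem_mk_left v e)
  have ha' : a ∈ f ia := hia a (Sym2.mem_mk_right v a)
  have hb' : b ∈ f ib := hib b (Sym2.mem_mk_right v b)
  have hc' : c ∈ f ic := hic c (Sym2.mem_mk_right v c)
  have hd' : d ∈ f id := hid d (Sym2.mem_mk_right v d)
  have he' : e ∈ f ie := hie e (Sym2.mem_mk_right v e)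
  have ne1 : ia ≠ ic := fun h => nac (hclique ia ha' (h ▸ hc') hac)
  have ne2 : ia ≠ id := fun h => nad (hclique ia ha' (h ▸ hd') had)
  have ne3 : ib ≠ id := fun h => nbd (hclique ib hb' (h ▸ hd') hbd)
  have ne4 : ib ≠ ie := fun h => nbe (hclique ib hb' (h ▸ he') hbe)
  have ne5 : ic ≠ ie := fun h => nce (hclique ic hc' (h ▸ he') hce)
  have hcard := card_ge_three ia ib ic id ie ne1 ne2 ne3 ne4 ne5
  have hsub : (({ia, ib, ic, id, ie} : Finset (Fin n)) : Set (Fin n)) ⊆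
      {i : Fin n | v ∈ f i} := by
    intro x hx
    simp only [Finset.coe_insert, Finset.coe_singleton, Set.mem_insert_iff,
      Set.mem_singleton_iff] at hx
    rcases hx with rfl | rfl | rfl | rfl | rfl <;> assumption
  calc 3 ≤ ({ia, ib, ic, id, ie} : Finset (Fin n)).card := hcard
    _ = (({ia, ib, ic, id, ie} : Finset (Fin n)) : Set (Fin n)).ncard :=
        (Set.ncard_coe_finset _).symm
    _ ≤ {i : Fin n | v ∈ f i}.ncard :=
        Set.ncard_le_ncard hsub (Set.toFinite _)

theorem icosahedron_vertex_in_three_cliques (n : ℕ) (f : Fin n → Set (Fin 12))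
    (hclique : ∀ i, Icosahedron.IsClique (f i))
    (hcover : ∀ e ∈ Icosahedron.edgeSet, ∃ i, ∀ x ∈ e, x ∈ f i)
    (v : Fin 12) :
    3 ≤ {i : Fin n | v ∈ f i}.ncard := by
  fin_cases v
  · exact key n f hclique hcover 0 1 2 3 4 5 (by decide)
  · exact key n f hclique hcover 1 0 2 7 6 5 (by decide)
  · exact key n f hclique hcover 2 0 1 7 8 3 (by decide)
  · exact key n f hclique hcover 3 0 2 8 9 4 (by decide)
  · exact key n f hclique hcover 4 0 3 9 10 5 (by decide)
  · exact key n f hclique hcover 5 0 1 6 10 4 (by decide)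
  · exact key n f hclique hcover 6 11 7 1 5 10 (by decide)
  · exact key n f hclique hcover 7 11 6 1 2 8 (by decide)
  · exact key n f hclique hcover 8 11 7 2 3 9 (by decide)
  · exact key n f hclique hcover 9 11 8 3 4 10 (by decide)
  · exact key n f hclique hcover 10 11 9 4 5 6 (by decide)
  · exact key n f hclique hcover 11 6 7 8 9 10 (by decide)
end
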